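/- Let d ≥ 1 be an integer, λ ∈ (0,1], ε ∈ (0,1), p ∈ ℝ^d, and let U ⊂ ℝ^d be bounded; write U^ε := U ∩ εℤ^d. Let a : εℤ^d × εℤ^d → ℝ be symmetric with λ ≤ a ≤ λ^{-1}, and write J(z) := |z|^{-(d+2)} for z ≠ 0. Let g : εℤ^d × εℤ^d → ℝ be antisymmetric (g(x,y) = −g(y,x)) and divergence free on U^ε, meaning that for every x ∈ U^ε the sum Σ_{z ∈ εℤ^d \ {0}} g(x+z, x) converges absolutely and equals 0. Then for every w : εℤ^d → ℝ with w = 0 on εℤ^d \ U^ε, (1/2) Σ_{x, z ∈ εℤ^d, z ≠ 0, (x ∈ U^ε or x+z ∈ U^ε)} a(x, x+z) J(z) [ (p·z + w(x+z) − w(x))² − (p·z)² ] ≥ − (1/2) Σ_{x, z ∈ εℤ^d, z ≠ 0, (x ∈ U^ε or x+z ∈ U^ε)} (a(x, x+z) J(z))^{-1} ( g(x+z, x) − a(x, x+z) J(z) (p·z) )², where the right-hand side is allowed to be −∞, in which case the inequality is trivial. -/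

import Mathlib

open scoped ENNReal

/-- The rescaled lattice point `ε·w ∈ εℤ^d ⊂ ℝ^d` (with the Euclidean norm). -/
noncomputable def pt (d : ℕ) (ε : ℝ) (w : Fin d → ℤ) : EuclideanSpace ℝ (Fin d) :=
  (WithLp.equiv 2 (Fin d → ℝ)).symm fun i => ε * (w i : ℝ)

lemma pt_coord_le {d : ℕ} {ε : ℝ} (hε : 0 < ε) (z : Fin d → ℤ) (i : Fin d) :
    ε * |(z i : ℝ)| ≤ ‖pt d ε z‖ := by
  have h : ‖pt d ε z‖ = Real.sqrt (∑ j, ‖(ε * (z j : ℝ))‖ ^ 2) := by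
    rw [pt, EuclideanSpace.norm_eq]
    rfl
  rw [h]
  have h1 : (ε * |(z i : ℝ)|) ^ 2 ≤ ∑ j, ‖(ε * (z j : ℝ))‖ ^ 2 := by
    have : (ε * |(z i : ℝ)|) ^ 2 = ‖(ε * (z i : ℝ))‖ ^ 2 := by
      rw [Real.norm_eq_abs, abs_mul, abs_of_pos hε, mul_pow, sq_abs]
    rw [this]
    exact Finset.single_le_sum (f := fun j => ‖(ε * (z j : ℝ))‖ ^ 2)
      (fun j _ => sq_nonneg _) (Finset.mem_univ i)
  calc ε * |(z i : ℝ)| = Real.sqrt ((ε * |(z i : ℝ)|) ^ 2) := by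
        rw [Real.sqrt_sq (by positivity)]
    _ ≤ _ := Real.sqrt_le_sqrt h1

lemma pt_eps_le {d : ℕ} {ε : ℝ} (hε : 0 < ε) {z : Fin d → ℤ} (hz : z ≠ 0) :
    ε ≤ ‖pt d ε z‖ := by
  obtain ⟨i, hi⟩ : ∃ i, z i ≠ 0 := by
    by_contra h
    push_neg at h
    exact hz (funext h)
  refine le_trans ?_ (pt_coord_le hε z i)
  have : (1 : ℝ) ≤ |(z i : ℝ)| := by
    rw [← Int.cast_abs]
    exact_mod_cast Int.one_le_abs hi
  nlinarith

lemma pt_pos {d : ℕ} {ε : ℝ} (hε : 0 < ε) {z : Fin d → ℤ} (hz : z ≠ 0) :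
    0 < ‖pt d ε z‖ := lt_of_lt_of_le hε (pt_eps_le hε hz)

/-- summability of products over pi types -/
lemma summable_pi_prod : ∀ (n : ℕ) (f : ℤ → ℝ), (∀ m, 0 ≤ f m) → Summable f →
    Summable (fun z : Fin n → ℤ => ∏ i, f (z i)) := by
  intro n
  induction n with
  | zero => intro f _ _; exact Summable.of_finite
  | succ n ih =>
    intro f hf0 hf
    have h := (hf.mul_of_nonneg (ih f hf0 hf) hf0 (fun z => Finset.prod_nonneg fun i _ => hf0 _))
    have := (((Fin.consEquiv fun _ : Fin (n + 1) => ℤ).symm).summable_iff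
      (f := fun q : ℤ × (Fin n → ℤ) => f q.1 * ∏ i, f (q.2 i))).mpr h
    refine this.congr fun z => ?_
    simp [Fin.consEquiv, Fin.prod_univ_succ, Fin.tail]

lemma summable_int_aux {s : ℝ} (hs : 1 < s) :
    Summable (fun m : ℤ => ((1 : ℝ) + |(m : ℝ)|) ^ (-s)) := by
  have hnat : Summable (fun n : ℕ => ((1 : ℝ) + n) ^ (-s)) := by
    have h2 : Summable (fun n : ℕ => ((n : ℝ)) ^ (-s)) := Real.summable_nat_rpow.mpr (by linarith)
    have := (summable_nat_add_iff (f := fun n : ℕ => ((n : ℝ)) ^ (-s)) 1).mpr h2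
    refine this.congr fun n => ?_
    push_cast
    ring_nf
  apply Summable.of_nat_of_neg <;>
    · refine hnat.congr fun n => ?_
      push_cast
      simp [abs_of_nonneg, Nat.cast_nonneg]

lemma summable_inv_pow_norm (d : ℕ) (hd : 1 ≤ d) {ε : ℝ} (hε0 : 0 < ε) (K : ℕ)
    (hK : d + 1 ≤ K) :
    Summable fun z : Fin d → ℤ => if z ≠ 0 then (‖pt d ε z‖ ^ K)⁻¹ else 0 := by
  have hd0 : (0 : ℝ) < d := by exact_mod_cast hd
  set s : ℝ := ((d : ℝ) + 1) / d with hs_def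
  have hs : 1 < s := by
    rw [hs_def, lt_div_iff₀ hd0]
    linarith
  have hds : (d : ℝ) * s = (d : ℝ) + 1 := by
    rw [hs_def]
    field_simp
  set C : ℝ := 2 ^ (d + 1) / ε ^ K with hC_def
  have hC0 : 0 < C := by positivity
  have hf0 : ∀ m : ℤ, (0 : ℝ) ≤ ((1 : ℝ) + |(m : ℝ)|) ^ (-s) :=
    fun m => Real.rpow_nonneg (by positivity) _
  have hsum := (summable_pi_prod d _ hf0 (summable_int_aux hs)).mul_left C
  refine Summable.of_nonneg_of_le (fun z => ?_) (fun z => ?_) hsum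
  · split
    · positivity
    · exact le_rfl
  · by_cases hz : z ≠ 0
    · rw [if_pos hz]
      set N : ℝ := ‖pt d ε z‖ with hN_def
      have hNε : ε ≤ N := pt_eps_le hε0 hz
      have hN0 : 0 < N := lt_of_lt_of_le hε0 hNε
      have hstep1 : ∀ i, (1 : ℝ) + |(z i : ℝ)| ≤ 2 * N / ε := by
        intro i
        rw [le_div_iff₀ hε0]
        have := pt_coord_le hε0 z i
        nlinarith
      have hb0 : ∀ i : Fin d, (0:ℝ) ≤ 1 + |(z i : ℝ)| := fun i => by positivity
      have hstep2 : (∏ i, ((1 : ℝ) + |(z i : ℝ)|)) ≤ (2 * N / ε) ^ d := by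
        calc (∏ i, ((1 : ℝ) + |(z i : ℝ)|)) ≤ ∏ _i : Fin d, (2 * N / ε) :=
              Finset.prod_le_prod (fun i _ => hb0 i) (fun i _ => hstep1 i)
          _ = (2 * N / ε) ^ d := by rw [Finset.prod_const, Finset.card_univ, Fintype.card_fin]
      have hprod_eq : (∏ i, ((1 : ℝ) + |(z i : ℝ)|) ^ (-s))
          = ((∏ i, ((1 : ℝ) + |(z i : ℝ)|)) ^ s)⁻¹ := by
        rw [Real.finset_prod_rpow _ _ (fun i _ => hb0 i), ← Real.rpow_neg]
        exact Finset.prod_nonneg fun i _ => hb0 i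
      have hP0 : 0 < ∏ i, ((1 : ℝ) + |(z i : ℝ)|) :=
        Finset.prod_pos fun i _ => by positivity
      have hQle : (∏ i, ((1 : ℝ) + |(z i : ℝ)|)) ^ s ≤ C * N ^ K := by
        have h1 : (∏ i, ((1 : ℝ) + |(z i : ℝ)|)) ^ s ≤ ((2 * N / ε) ^ d) ^ s :=
          Real.rpow_le_rpow hP0.le hstep2 (by positivity)
        have h2 : ((2 * N / ε) ^ d) ^ s = (2 * N / ε) ^ (d + 1) := by
          rw [← Real.rpow_natCast (2 * N / ε) d, ← Real.rpow_mul (by positivity), hds,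
            ← Real.rpow_natCast (2 * N / ε) (d + 1)]
          norm_num
        have h3 : (2 * N / ε) ^ (d + 1) ≤ C * N ^ K := by
          rw [div_pow, hC_def]
          rw [div_mul_eq_mul_div, div_le_div_iff₀ (by positivity) (by positivity)]
          have hNK : N ^ (d + 1) * ε ^ K ≤ N ^ K * ε ^ (d + 1) := by
            obtain ⟨m, hm⟩ : ∃ m, K = (d + 1) + m := ⟨K - (d + 1), by omega⟩
            subst hm
            have : ε ^ m ≤ N ^ m := pow_le_pow_left₀ hε0.le hNε _
            calc N ^ (d + 1) * ε ^ ((d+1) + m) = (N ^ (d+1) * ε ^ (d+1)) * ε ^ m := by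
                  rw [pow_add]; ring
              _ ≤ (N ^ (d+1) * ε ^ (d+1)) * N ^ m := by
                  exact mul_le_mul_of_nonneg_left this (by positivity)
              _ = N ^ ((d+1)+m) * ε ^ (d+1) := by rw [pow_add]; ring
          calc (2 * N) ^ (d+1) * ε ^ K = 2 ^ (d+1) * (N ^ (d+1) * ε ^ K) := by ring
            _ ≤ 2 ^ (d+1) * (N ^ K * ε ^ (d+1)) := by
                exact mul_le_mul_of_nonneg_left hNK (by positivity)
            _ = 2 ^ (d + 1) * N ^ K * ε ^ (d + 1) := by ring
        exact h1.trans (h2 ▸ h3)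
      rw [hprod_eq]
      have hQ0 : 0 < (∏ i, ((1 : ℝ) + |(z i : ℝ)|)) ^ s := Real.rpow_pos_of_pos hP0 s
      calc (N ^ K)⁻¹ = C * (C * N ^ K)⁻¹ := by
            field_simp
          _ ≤ C * ((∏ i, ((1 : ℝ) + |(z i : ℝ)|)) ^ s)⁻¹ := by
            exact mul_le_mul_of_nonneg_left (inv_anti₀ hQ0 hQle) hC0.le
    · rw [if_neg hz]
      positivity

lemma finite_support (d : ℕ) {ε : ℝ} (hε0 : 0 < ε) {U : Set (EuclideanSpace ℝ (Fin d))}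
    (hU : Bornology.IsBounded U) : {x : Fin d → ℤ | pt d ε x ∈ U}.Finite := by
  obtain ⟨R, hR⟩ := (Metric.isBounded_iff_subset_closedBall 0).mp hU
  set M : ℤ := ⌈R / ε⌉ with hM
  have hsub : {x : Fin d → ℤ | pt d ε x ∈ U} ⊆
      Set.pi Set.univ (fun _ : Fin d => Set.Icc (-M) M) := by
    intro x hx
    have hnorm : ‖pt d ε x‖ ≤ R := by
      have := hR hx
      rwa [Metric.mem_closedBall, dist_zero_right] at this
    intro i _
    have h1 : ε * |(x i : ℝ)| ≤ R := (pt_coord_le hε0 x i).trans hnorm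
    have h2 : |(x i : ℝ)| ≤ (M : ℝ) := by
      have : |(x i : ℝ)| ≤ R / ε := (le_div_iff₀ hε0).mpr (by linarith [h1])
      exact this.trans (Int.le_ceil _)
    have h3 : |x i| ≤ M := by
      have := h2
      rw [← Int.cast_abs] at this
      exact_mod_cast this
    rw [Set.mem_Icc]
    constructor <;> [linarith [neg_abs_le (x i)]; linarith [le_abs_self (x i)]]
  exact (Set.Finite.pi fun _ => Set.finite_Icc _ _).subset hsub

def shiftEquiv (d : ℕ) : ((Fin d → ℤ) × (Fin d → ℤ)) ≃ ((Fin d → ℤ) × (Fin d → ℤ)) where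
  toFun q := (q.1 + q.2, q.2)
  invFun q := (q.1 - q.2, q.2)
  left_inv q := by simp
  right_inv q := by simp

def flipEquiv (d : ℕ) : ((Fin d → ℤ) × (Fin d → ℤ)) ≃ ((Fin d → ℤ) × (Fin d → ℤ)) where
  toFun q := (q.1 + q.2, -q.2)
  invFun q := (q.1 + q.2, -q.2)
  left_inv q := by simp
  right_inv q := by simp

lemma gen_bound {ι : Type*} (L T G : ι → ℝ) (hLsum : Summable L) (hGsum : Summable G)
    (hG0 : ∑' q, G q = 0) (hpt : ∀ q, 2 * G q - T q ≤ L q) (hT : ∀ q, 0 ≤ T q) :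
    ENNReal.ofReal (-(2⁻¹ * ∑' q, L q)) ≤ 2⁻¹ * ∑' q, ENNReal.ofReal (T q) := by
  by_cases h : (∑' q, ENNReal.ofReal (T q)) = ⊤
  · rw [h, ENNReal.mul_top (by norm_num)]
    exact le_top
  · have hTsum : Summable T := by
      have h2 := ENNReal.summable_toReal h
      refine h2.congr fun q => ?_
      rw [ENNReal.toReal_ofReal (hT q)]
    have hS2 : Summable (fun q => 2 * G q - T q) := ((hGsum.mul_left 2).sub hTsum)
    have hts : ∑' q, (2 * G q - T q) = - ∑' q, T q := by
      rw [Summable.tsum_sub (hGsum.mul_left 2) hTsum, tsum_mul_left, hG0]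
      ring
    have hineq : - ∑' q, T q ≤ ∑' q, L q := by
      rw [← hts]
      exact Summable.tsum_le_tsum hpt hS2 hLsum
    rw [← ENNReal.ofReal_tsum_of_nonneg hT hTsum,
      show ((2 : ℝ≥0∞)⁻¹) = ENNReal.ofReal 2⁻¹ by
        rw [ENNReal.ofReal_inv_of_pos two_pos]; norm_num,
      ← ENNReal.ofReal_mul (by norm_num)]
    apply ENNReal.ofReal_le_ofReal
    linarith

set_option maxHeartbeats 1000000 in
open scoped Classical in
/-- Young-inequality lower bound via a solenoidal field: with
`J(z) = |z|^{-(d+2)}`, if `g` is antisymmetric and divergence free on `U^ε`, then for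
every `w` vanishing outside `U^ε`,
`(1/2) Σ_{x,z≠0, x ∈ U^ε or x+z ∈ U^ε} a(x,x+z) J(z) [(p·z + w(x+z) − w(x))² − (p·z)²]
  ≥ −(1/2) Σ (a(x,x+z) J(z))^{-1} (g(x+z,x) − a(x,x+z) J(z) (p·z))²`,
the right-hand side being interpreted in `[0,∞]` (so the inequality is trivial if it is
infinite).  Lattice points are indexed by integer vectors (`x = ε·w`). -/
theorem young_solenoidal_bound (d : ℕ) (hd : 1 ≤ d) (lam : ℝ) (hlam0 : 0 < lam)
    (hlam1 : lam ≤ 1) (ε : ℝ) (hε0 : 0 < ε) (hε1 : ε < 1)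
    (p : EuclideanSpace ℝ (Fin d))
    (U : Set (EuclideanSpace ℝ (Fin d))) (hU : Bornology.IsBounded U)
    (a : (Fin d → ℤ) → (Fin d → ℤ) → ℝ)
    (hsymm : ∀ x y, a x y = a y x)
    (hbd : ∀ x y, lam ≤ a x y ∧ a x y ≤ lam⁻¹)
    (g : (Fin d → ℤ) → (Fin d → ℤ) → ℝ)
    (hanti : ∀ x y, g x y = - g y x)
    (hdivSummable : ∀ x, pt d ε x ∈ U →
      Summable (fun z : Fin d → ℤ => if z ≠ 0 then g (x + z) x else 0))
    (hdivFree : ∀ x, pt d ε x ∈ U →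
      ∑' z : Fin d → ℤ, (if z ≠ 0 then g (x + z) x else 0) = 0)
    (w : (Fin d → ℤ) → ℝ) (hw : ∀ x, pt d ε x ∉ U → w x = 0) :
    ENNReal.ofReal
      (-(2⁻¹ * ∑' q : (Fin d → ℤ) × (Fin d → ℤ),
        (if q.2 ≠ 0 ∧ (pt d ε q.1 ∈ U ∨ pt d ε (q.1 + q.2) ∈ U) then
          a q.1 (q.1 + q.2) * (‖pt d ε q.2‖ ^ (d + 2))⁻¹ *
            (((∑ i, p i * (ε * (q.2 i : ℝ))) + w (q.1 + q.2) - w q.1) ^ 2 -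
              (∑ i, p i * (ε * (q.2 i : ℝ))) ^ 2)
        else 0))) ≤
    2⁻¹ * ∑' q : (Fin d → ℤ) × (Fin d → ℤ),
      ENNReal.ofReal
        (if q.2 ≠ 0 ∧ (pt d ε q.1 ∈ U ∨ pt d ε (q.1 + q.2) ∈ U) then
          (a q.1 (q.1 + q.2) * (‖pt d ε q.2‖ ^ (d + 2))⁻¹)⁻¹ *
            (g (q.1 + q.2) q.1 -
              a q.1 (q.1 + q.2) * (‖pt d ε q.2‖ ^ (d + 2))⁻¹ *
                (∑ i, p i * (ε * (q.2 i : ℝ)))) ^ 2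
        else 0) := by
  classical
  have hS : {x : Fin d → ℤ | pt d ε x ∈ U}.Finite := finite_support d hε0 hU
  have hlaminv : (0:ℝ) < lam⁻¹ := by positivity
  have ha_pos : ∀ x y, 0 < a x y := fun x y => lt_of_lt_of_le hlam0 (hbd x y).1
  have hw2sum : Summable (fun x : Fin d → ℤ => (w x) ^ 2) := by
    apply summable_of_ne_finset_zero (s := hS.toFinset)
    intro x hx
    have hxU : pt d ε x ∉ U := fun hmem => hx (hS.mem_toFinset.mpr hmem)
    rw [hw x hxU]
    ring
  have hwabs : Summable (fun x : Fin d → ℤ => |w x|) := by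
    apply summable_of_ne_finset_zero (s := hS.toFinset)
    intro x hx
    have hxU : pt d ε x ∉ U := fun hmem => hx (hS.mem_toFinset.mpr hmem)
    rw [hw x hxU]
    simp
  have hJ2 := summable_inv_pow_norm d hd hε0 (d + 2) (by omega)
  have hJ1 := summable_inv_pow_norm d hd hε0 (d + 1) (by omega)
  have hJnn : ∀ (K : ℕ) (z : Fin d → ℤ),
      0 ≤ (if z ≠ 0 then (‖pt d ε z‖ ^ K)⁻¹ else 0) := by
    intro K z
    split
    · positivity
    · exact le_rfl
  have hPle : ∀ z : Fin d → ℤ, |∑ i, p i * (ε * (z i : ℝ))| ≤ ‖p‖ * ‖pt d ε z‖ := by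
    intro z
    have h1 : (∑ i, p i * (ε * (z i : ℝ))) = inner ℝ p (pt d ε z) := by
      rw [PiLp.inner_apply]
      apply Finset.sum_congr rfl
      intro i _
      rw [RCLike.inner_apply, conj_trivial]
      exact mul_comm _ _
    rw [h1]
    exact abs_real_inner_le_norm p _
  -- the T-nonnegativity
  have hTnn : ∀ q : (Fin d → ℤ) × (Fin d → ℤ),
      (0:ℝ) ≤ (if q.2 ≠ 0 ∧ (pt d ε q.1 ∈ U ∨ pt d ε (q.1 + q.2) ∈ U) then
          (a q.1 (q.1 + q.2) * (‖pt d ε q.2‖ ^ (d + 2))⁻¹)⁻¹ *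
            (g (q.1 + q.2) q.1 -
              a q.1 (q.1 + q.2) * (‖pt d ε q.2‖ ^ (d + 2))⁻¹ *
                (∑ i, p i * (ε * (q.2 i : ℝ)))) ^ 2
        else 0) := by
    intro q
    split
    · apply mul_nonneg _ (sq_nonneg _)
      apply inv_nonneg.mpr
      exact mul_nonneg (ha_pos _ _).le (by positivity)
    · exact le_rfl
  -- pointwise Young inequality
  have hpoint : ∀ q : (Fin d → ℤ) × (Fin d → ℤ),
      2 * (if q.2 ≠ 0 ∧ (pt d ε q.1 ∈ U ∨ pt d ε (q.1 + q.2) ∈ U) then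
            g (q.1 + q.2) q.1 * (w (q.1 + q.2) - w q.1) else 0)
        - (if q.2 ≠ 0 ∧ (pt d ε q.1 ∈ U ∨ pt d ε (q.1 + q.2) ∈ U) then
            (a q.1 (q.1 + q.2) * (‖pt d ε q.2‖ ^ (d + 2))⁻¹)⁻¹ *
              (g (q.1 + q.2) q.1 -
                a q.1 (q.1 + q.2) * (‖pt d ε q.2‖ ^ (d + 2))⁻¹ *
                  (∑ i, p i * (ε * (q.2 i : ℝ)))) ^ 2
          else 0)
      ≤ (if q.2 ≠ 0 ∧ (pt d ε q.1 ∈ U ∨ pt d ε (q.1 + q.2) ∈ U) then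
          a q.1 (q.1 + q.2) * (‖pt d ε q.2‖ ^ (d + 2))⁻¹ *
            (((∑ i, p i * (ε * (q.2 i : ℝ))) + w (q.1 + q.2) - w q.1) ^ 2 -
              (∑ i, p i * (ε * (q.2 i : ℝ))) ^ 2)
        else 0) := by
    intro q
    by_cases h : q.2 ≠ 0 ∧ (pt d ε q.1 ∈ U ∨ pt d ε (q.1 + q.2) ∈ U)
    · simp only [if_pos h]
      set A : ℝ := a q.1 (q.1 + q.2) * (‖pt d ε q.2‖ ^ (d + 2))⁻¹ with hA_def
      have hA : 0 < A :=
        mul_pos (ha_pos _ _) (inv_pos.mpr (pow_pos (pt_pos hε0 h.1) _))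
      have hA' : A ≠ 0 := hA.ne'
      set P : ℝ := ∑ i, p i * (ε * (q.2 i : ℝ)) with hP_def
      set u : ℝ := w q.1
      set v : ℝ := w (q.1 + q.2)
      set G : ℝ := g (q.1 + q.2) q.1
      have key : A * ((P + v - u) ^ 2 - P ^ 2)
          - (2 * (G * (v - u)) - A⁻¹ * (G - A * P) ^ 2)
          = (A * (v - u) - (G - A * P)) ^ 2 / A := by
        field_simp
        ring
      have hnn : 0 ≤ (A * (v - u) - (G - A * P)) ^ 2 / A :=
        div_nonneg (sq_nonneg _) hA.le
      linarith [key, hnn]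
    · simp only [if_neg h]
      norm_num
  -- the divergence-free vanishing sums
  have hfibH : ∀ x : Fin d → ℤ, Summable (fun z : Fin d → ℤ =>
      |if z ≠ 0 ∧ pt d ε x ∈ U then g (x + z) x * w x else 0|) := by
    intro x
    by_cases hx : pt d ε x ∈ U
    · have h1 := ((hdivSummable x hx).abs.mul_right |w x|)
      refine h1.congr fun z => ?_
      by_cases hz : z ≠ 0 <;> simp [hx, hz, abs_mul]
    · refine summable_zero.congr fun z => ?_
      simp [hx]
  have hHabs : Summable (fun q : (Fin d → ℤ) × (Fin d → ℤ) =>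
      |if q.2 ≠ 0 ∧ pt d ε q.1 ∈ U then g (q.1 + q.2) q.1 * w q.1 else 0|) := by
    rw [summable_prod_of_nonneg (fun q => abs_nonneg _)]
    refine ⟨fun x => hfibH x, ?_⟩
    apply summable_of_ne_finset_zero (s := hS.toFinset)
    intro x hx
    have hxU : pt d ε x ∉ U := fun hmem => hx (hS.mem_toFinset.mpr hmem)
    simp [hxU]
  have hHsum : Summable (fun q : (Fin d → ℤ) × (Fin d → ℤ) =>
      if q.2 ≠ 0 ∧ pt d ε q.1 ∈ U then g (q.1 + q.2) q.1 * w q.1 else 0) :=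
    hHabs.of_abs
  have hH0 : ∑' q : (Fin d → ℤ) × (Fin d → ℤ),
      (if q.2 ≠ 0 ∧ pt d ε q.1 ∈ U then g (q.1 + q.2) q.1 * w q.1 else 0) = 0 := by
    rw [Summable.tsum_prod' hHsum (fun x => (hfibH x).of_abs)]
    have hinner : ∀ x : Fin d → ℤ, ∑' z : Fin d → ℤ,
        (if z ≠ 0 ∧ pt d ε x ∈ U then g (x + z) x * w x else 0) = 0 := by
      intro x
      by_cases hx : pt d ε x ∈ U
      · have heq : (fun z : Fin d → ℤ =>
            if z ≠ 0 ∧ pt d ε x ∈ U then g (x + z) x * w x else 0)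
            = fun z : Fin d → ℤ => (if z ≠ 0 then g (x + z) x else 0) * w x := by
          funext z
          by_cases hz : z ≠ 0 <;> simp [hx, hz]
        rw [heq, tsum_mul_right, hdivFree x hx, zero_mul]
      · simp [hx]
    simp only [hinner, tsum_zero]
  -- identify conditioned G2 with H
  have hG2eq : ∀ q : (Fin d → ℤ) × (Fin d → ℤ),
      (if q.2 ≠ 0 ∧ (pt d ε q.1 ∈ U ∨ pt d ε (q.1 + q.2) ∈ U) then
        g (q.1 + q.2) q.1 * w q.1 else 0)
      = (if q.2 ≠ 0 ∧ pt d ε q.1 ∈ U then g (q.1 + q.2) q.1 * w q.1 else 0) := by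
    intro q
    by_cases hx : pt d ε q.1 ∈ U
    · by_cases hz : q.2 ≠ 0 <;> simp [hx, hz]
    · simp [hx, hw _ hx]
  have hG2sum : Summable (fun q : (Fin d → ℤ) × (Fin d → ℤ) =>
      if q.2 ≠ 0 ∧ (pt d ε q.1 ∈ U ∨ pt d ε (q.1 + q.2) ∈ U) then
        g (q.1 + q.2) q.1 * w q.1 else 0) :=
    hHsum.congr fun q => (hG2eq q).symm
  have hG2_0 : ∑' q : (Fin d → ℤ) × (Fin d → ℤ),
      (if q.2 ≠ 0 ∧ (pt d ε q.1 ∈ U ∨ pt d ε (q.1 + q.2) ∈ U) then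
        g (q.1 + q.2) q.1 * w q.1 else 0) = 0 :=
    (tsum_congr hG2eq).trans hH0
  -- the flip identity
  have hG1comp : ∀ q : (Fin d → ℤ) × (Fin d → ℤ),
      ((fun q : (Fin d → ℤ) × (Fin d → ℤ) =>
        if q.2 ≠ 0 ∧ (pt d ε q.1 ∈ U ∨ pt d ε (q.1 + q.2) ∈ U) then
          g (q.1 + q.2) q.1 * w (q.1 + q.2) else 0) ∘ (flipEquiv d)) q
      = -(if q.2 ≠ 0 ∧ (pt d ε q.1 ∈ U ∨ pt d ε (q.1 + q.2) ∈ U) then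
          g (q.1 + q.2) q.1 * w q.1 else 0) := by
    intro q
    have harg : q.1 + q.2 + -q.2 = q.1 := by
      funext i
      simp
    simp only [Function.comp_apply, flipEquiv, Equiv.coe_fn_mk, harg, neg_ne_zero]
    by_cases h1 : q.2 ≠ 0 <;>
      by_cases h2 : pt d ε q.1 ∈ U <;>
        by_cases h3 : pt d ε (q.1 + q.2) ∈ U <;>
          simp [h1, h2, h3, hanti q.1 (q.1 + q.2)]
  have hG1sum : Summable (fun q : (Fin d → ℤ) × (Fin d → ℤ) =>
      if q.2 ≠ 0 ∧ (pt d ε q.1 ∈ U ∨ pt d ε (q.1 + q.2) ∈ U) then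
        g (q.1 + q.2) q.1 * w (q.1 + q.2) else 0) := by
    rw [← (flipEquiv d).summable_iff]
    refine (hG2sum.neg).congr fun q => ?_
    exact (hG1comp q).symm
  have hG1_0 : ∑' q : (Fin d → ℤ) × (Fin d → ℤ),
      (if q.2 ≠ 0 ∧ (pt d ε q.1 ∈ U ∨ pt d ε (q.1 + q.2) ∈ U) then
        g (q.1 + q.2) q.1 * w (q.1 + q.2) else 0) = 0 := by
    have h1 := (flipEquiv d).tsum_eq (fun q : (Fin d → ℤ) × (Fin d → ℤ) =>
      if q.2 ≠ 0 ∧ (pt d ε q.1 ∈ U ∨ pt d ε (q.1 + q.2) ∈ U) then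
        g (q.1 + q.2) q.1 * w (q.1 + q.2) else 0)
    rw [← h1]
    calc ∑' q : (Fin d → ℤ) × (Fin d → ℤ), _ = ∑' q : (Fin d → ℤ) × (Fin d → ℤ),
          -(if q.2 ≠ 0 ∧ (pt d ε q.1 ∈ U ∨ pt d ε (q.1 + q.2) ∈ U) then
            g (q.1 + q.2) q.1 * w q.1 else 0) := tsum_congr hG1comp
      _ = 0 := by rw [tsum_neg, hG2_0, neg_zero]
  -- G summable and zero
  have hGsum : Summable (fun q : (Fin d → ℤ) × (Fin d → ℤ) =>
      if q.2 ≠ 0 ∧ (pt d ε q.1 ∈ U ∨ pt d ε (q.1 + q.2) ∈ U) then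
        g (q.1 + q.2) q.1 * (w (q.1 + q.2) - w q.1) else 0) := by
    refine (hG1sum.sub hG2sum).congr fun q => ?_
    by_cases h : q.2 ≠ 0 ∧ (pt d ε q.1 ∈ U ∨ pt d ε (q.1 + q.2) ∈ U) <;>
      simp [h] <;> ring
  have hG0 : ∑' q : (Fin d → ℤ) × (Fin d → ℤ),
      (if q.2 ≠ 0 ∧ (pt d ε q.1 ∈ U ∨ pt d ε (q.1 + q.2) ∈ U) then
        g (q.1 + q.2) q.1 * (w (q.1 + q.2) - w q.1) else 0) = 0 := by
    have heq : ∀ q : (Fin d → ℤ) × (Fin d → ℤ),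
        (if q.2 ≠ 0 ∧ (pt d ε q.1 ∈ U ∨ pt d ε (q.1 + q.2) ∈ U) then
          g (q.1 + q.2) q.1 * (w (q.1 + q.2) - w q.1) else 0)
        = (if q.2 ≠ 0 ∧ (pt d ε q.1 ∈ U ∨ pt d ε (q.1 + q.2) ∈ U) then
            g (q.1 + q.2) q.1 * w (q.1 + q.2) else 0)
          - (if q.2 ≠ 0 ∧ (pt d ε q.1 ∈ U ∨ pt d ε (q.1 + q.2) ∈ U) then
            g (q.1 + q.2) q.1 * w q.1 else 0) := by
      intro q
      by_cases h : q.2 ≠ 0 ∧ (pt d ε q.1 ∈ U ∨ pt d ε (q.1 + q.2) ∈ U) <;>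
        simp [h] <;> ring
    rw [tsum_congr heq, Summable.tsum_sub hG1sum hG2sum, hG1_0, hG2_0, sub_zero]
  -- Summable L
  have hM1 : Summable (fun q : (Fin d → ℤ) × (Fin d → ℤ) =>
      (w q.1) ^ 2 * (if q.2 ≠ 0 then (‖pt d ε q.2‖ ^ (d + 2))⁻¹ else 0)) :=
    Summable.mul_of_nonneg (f := fun x : Fin d → ℤ => (w x) ^ 2)
      (g := fun z : Fin d → ℤ => if z ≠ 0 then (‖pt d ε z‖ ^ (d + 2))⁻¹ else 0)
      hw2sum hJ2 (fun x => sq_nonneg _) (fun z => hJnn _ z)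
  have hM2 : Summable (fun q : (Fin d → ℤ) × (Fin d → ℤ) =>
      (w (q.1 + q.2)) ^ 2 * (if q.2 ≠ 0 then (‖pt d ε q.2‖ ^ (d + 2))⁻¹ else 0)) := by
    have h1 := ((shiftEquiv d).summable_iff
      (f := fun q : (Fin d → ℤ) × (Fin d → ℤ) =>
        (w q.1) ^ 2 * (if q.2 ≠ 0 then (‖pt d ε q.2‖ ^ (d + 2))⁻¹ else 0))).mpr hM1
    exact h1.congr fun q => by simp [shiftEquiv]
  have hM3 : Summable (fun q : (Fin d → ℤ) × (Fin d → ℤ) =>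
      |w q.1| * (if q.2 ≠ 0 then (‖pt d ε q.2‖ ^ (d + 1))⁻¹ else 0)) :=
    Summable.mul_of_nonneg (f := fun x : Fin d → ℤ => |w x|)
      (g := fun z : Fin d → ℤ => if z ≠ 0 then (‖pt d ε z‖ ^ (d + 1))⁻¹ else 0)
      hwabs hJ1 (fun x => abs_nonneg _) (fun z => hJnn _ z)
  have hM4 : Summable (fun q : (Fin d → ℤ) × (Fin d → ℤ) =>
      |w (q.1 + q.2)| * (if q.2 ≠ 0 then (‖pt d ε q.2‖ ^ (d + 1))⁻¹ else 0)) := by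
    have h1 := ((shiftEquiv d).summable_iff
      (f := fun q : (Fin d → ℤ) × (Fin d → ℤ) =>
        |w q.1| * (if q.2 ≠ 0 then (‖pt d ε q.2‖ ^ (d + 1))⁻¹ else 0))).mpr hM3
    exact h1.congr fun q => by simp [shiftEquiv]
  have hMaj : Summable (fun q : (Fin d → ℤ) × (Fin d → ℤ) =>
      lam⁻¹ * ((2 * ((w q.1) ^ 2 * (if q.2 ≠ 0 then (‖pt d ε q.2‖ ^ (d + 2))⁻¹ else 0))
        + 2 * ((w (q.1 + q.2)) ^ 2 * (if q.2 ≠ 0 then (‖pt d ε q.2‖ ^ (d + 2))⁻¹ else 0)))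
        + ((2 * ‖p‖) * (|w q.1| * (if q.2 ≠ 0 then (‖pt d ε q.2‖ ^ (d + 1))⁻¹ else 0))
          + (2 * ‖p‖) * (|w (q.1 + q.2)| *
            (if q.2 ≠ 0 then (‖pt d ε q.2‖ ^ (d + 1))⁻¹ else 0))))) :=
    ((((hM1.mul_left 2).add (hM2.mul_left 2)).add
      ((hM3.mul_left (2 * ‖p‖)).add (hM4.mul_left (2 * ‖p‖)))).mul_left lam⁻¹)
  have hLsum : Summable (fun q : (Fin d → ℤ) × (Fin d → ℤ) =>
      if q.2 ≠ 0 ∧ (pt d ε q.1 ∈ U ∨ pt d ε (q.1 + q.2) ∈ U) then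
        a q.1 (q.1 + q.2) * (‖pt d ε q.2‖ ^ (d + 2))⁻¹ *
          (((∑ i, p i * (ε * (q.2 i : ℝ))) + w (q.1 + q.2) - w q.1) ^ 2 -
            (∑ i, p i * (ε * (q.2 i : ℝ))) ^ 2)
      else 0) := by
    apply Summable.of_abs
    refine Summable.of_nonneg_of_le (fun q => abs_nonneg _) (fun q => ?_) hMaj
    by_cases h : q.2 ≠ 0 ∧ (pt d ε q.1 ∈ U ∨ pt d ε (q.1 + q.2) ∈ U)
    · simp only [if_pos h, if_pos h.1]
      set N : ℝ := ‖pt d ε q.2‖ with hN_def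
      have hN : 0 < N := pt_pos hε0 h.1
      set A : ℝ := a q.1 (q.1 + q.2) with hA_def
      have hA : 0 < A := ha_pos _ _
      have hAle : A ≤ lam⁻¹ := (hbd _ _).2
      set j2 : ℝ := (N ^ (d + 2))⁻¹ with hj2_def
      set j1 : ℝ := (N ^ (d + 1))⁻¹ with hj1_def
      have hj2 : 0 < j2 := by positivity
      have hj1 : 0 < j1 := by positivity
      have hj21 : j2 * N = j1 := by
        rw [hj2_def, hj1_def, pow_succ]
        field_simp
      set P : ℝ := ∑ i, p i * (ε * (q.2 i : ℝ)) with hP_def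
      have hPN : |P| ≤ ‖p‖ * N := hPle q.2
      set u : ℝ := w q.1
      set v : ℝ := w (q.1 + q.2)
      have e1 : (P + v - u) ^ 2 - P ^ 2 = (v - u) * ((v - u) + 2 * P) := by ring
      have habs : |A * j2 * ((P + v - u) ^ 2 - P ^ 2)|
          = A * j2 * (|v - u| * |(v - u) + 2 * P|) := by
        rw [e1, abs_mul, abs_mul, abs_mul, abs_of_pos hA, abs_of_pos hj2]
      have s1 : |v - u| ≤ |v| + |u| := abs_sub _ _
      have s2 : |(v - u) + 2 * P| ≤ (|v| + |u|) + 2 * (‖p‖ * N) := by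
        refine (abs_add_le _ _).trans ?_
        have : |2 * P| = 2 * |P| := by
          rw [abs_mul]
          norm_num
        rw [this]
        have h2P : 2 * |P| ≤ 2 * (‖p‖ * N) := by linarith
        exact add_le_add s1 h2P
      have step1 : A * j2 * (|v - u| * |(v - u) + 2 * P|)
          ≤ A * j2 * ((|v| + |u|) * ((|v| + |u|) + 2 * (‖p‖ * N))) := by
        apply mul_le_mul_of_nonneg_left _ (mul_pos hA hj2).le
        apply mul_le_mul s1 s2 (abs_nonneg _)
        positivity
      have step2 : A * j2 * ((|v| + |u|) * ((|v| + |u|) + 2 * (‖p‖ * N)))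
          ≤ lam⁻¹ * (j2 * ((|v| + |u|) * ((|v| + |u|) + 2 * (‖p‖ * N)))) := by
        have h1 : A * j2 ≤ lam⁻¹ * j2 := mul_le_mul_of_nonneg_right hAle hj2.le
        have h2 : 0 ≤ (|v| + |u|) * ((|v| + |u|) + 2 * (‖p‖ * N)) := by positivity
        calc A * j2 * ((|v| + |u|) * ((|v| + |u|) + 2 * (‖p‖ * N)))
            ≤ lam⁻¹ * j2 * ((|v| + |u|) * ((|v| + |u|) + 2 * (‖p‖ * N))) :=
              mul_le_mul_of_nonneg_right h1 h2
          _ = lam⁻¹ * (j2 * ((|v| + |u|) * ((|v| + |u|) + 2 * (‖p‖ * N)))) := by ring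
      have step3 : j2 * ((|v| + |u|) * ((|v| + |u|) + 2 * (‖p‖ * N)))
          = j2 * (|v| + |u|) ^ 2 + 2 * ‖p‖ * (j2 * N) * (|v| + |u|) := by ring
      have step4 : j2 * (|v| + |u|) ^ 2 ≤ j2 * (2 * u ^ 2 + 2 * v ^ 2) := by
        apply mul_le_mul_of_nonneg_left _ hj2.le
        nlinarith [sq_nonneg (|u| - |v|), sq_abs u, sq_abs v]
      calc |A * j2 * ((P + v - u) ^ 2 - P ^ 2)|
          = A * j2 * (|v - u| * |(v - u) + 2 * P|) := habs
        _ ≤ lam⁻¹ * (j2 * ((|v| + |u|) * ((|v| + |u|) + 2 * (‖p‖ * N)))) :=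
            step1.trans step2
        _ = lam⁻¹ * (j2 * (|v| + |u|) ^ 2 + 2 * ‖p‖ * (j2 * N) * (|v| + |u|)) := by
            rw [step3]
        _ ≤ lam⁻¹ * (j2 * (2 * u ^ 2 + 2 * v ^ 2) + 2 * ‖p‖ * (j2 * N) * (|v| + |u|)) := by
            apply mul_le_mul_of_nonneg_left _ hlaminv.le
            linarith
        _ = lam⁻¹ * ((2 * (u ^ 2 * j2) + 2 * (v ^ 2 * j2))
            + ((2 * ‖p‖) * (|u| * j1) + (2 * ‖p‖) * (|v| * j1))) := by
            rw [hj21]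
            ring
    · rw [if_neg h]
      simp only [abs_zero]
      have a2 := hJnn (d + 2) q.2
      have a1 := hJnn (d + 1) q.2
      apply mul_nonneg hlaminv.le
      apply add_nonneg
      · apply add_nonneg
        · exact mul_nonneg (by norm_num) (mul_nonneg (sq_nonneg _) a2)
        · exact mul_nonneg (by norm_num) (mul_nonneg (sq_nonneg _) a2)
      · apply add_nonneg
        · exact mul_nonneg (by positivity) (mul_nonneg (abs_nonneg _) a1)
        · exact mul_nonneg (by positivity) (mul_nonneg (abs_nonneg _) a1)
  refine gen_bound _ _
    (fun q : (Fin d → ℤ) × (Fin d → ℤ) =>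
      if q.2 ≠ 0 ∧ (pt d ε q.1 ∈ U ∨ pt d ε (q.1 + q.2) ∈ U) then
        g (q.1 + q.2) q.1 * (w (q.1 + q.2) - w q.1) else 0)
    ?_ ?_ ?_ ?_ ?_
  · exact hLsum
  · exact hGsum
  · exact hG0
  · exact hpoint
  · exact hTnn
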